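/- Let n = 2k with k ≥ 1 and let X be an n×n complex cross matrix. For each i with 0 ≤ i < k, let Y_i be the n×n matrix that agrees with the identity matrix except that its entries in positions (i,i), (i,n-1-i), (n-1-i,i), (n-1-i,n-1-i) equal the corresponding entries of X. Then X = Y_0 · Y_1 · ⋯ · Y_{k-1} (product taken in order of increasing index). -/
import Mathlib


/-- An `n × n` complex matrix is a *cross matrix* if its nonzero entries lie
only on the main diagonal and the anti-diagonal (0-based indices). -/
def IsCrossMatrix {n : ℕ} (X : Matrix (Fin n) (Fin n) ℂ) : Prop :=
  ∀ i j : Fin n, j ≠ i → (i : ℕ) + (j : ℕ) + 1 ≠ n → X i j = 0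

/-- For `n = 2k`, a cross matrix factors as `X = Y₀ ⬝ Y₁ ⬝ ⋯ ⬝ Y_{k-1}`, where
`Yᵢ` agrees with the identity except at the four positions `(i,i)`, `(i,n-1-i)`,
`(n-1-i,i)`, `(n-1-i,n-1-i)`, where it agrees with `X`. -/
theorem crossMatrix_factorization_even (k : ℕ) (hk : 1 ≤ k)
    (X : Matrix (Fin (2 * k)) (Fin (2 * k)) ℂ) (hX : IsCrossMatrix X)
    (Y : ℕ → Matrix (Fin (2 * k)) (Fin (2 * k)) ℂ)
    (hY : ∀ i < k, ∀ a b : Fin (2 * k),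
      Y i a b =
        if ((a : ℕ) = i ∨ (a : ℕ) = 2 * k - 1 - i) ∧
            ((b : ℕ) = i ∨ (b : ℕ) = 2 * k - 1 - i) then
          X a b
        else (1 : Matrix (Fin (2 * k)) (Fin (2 * k)) ℂ) a b) :
    X = ((List.range k).map Y).prod := by
  have key : ∀ m, m ≤ k → ∀ a b : Fin (2 * k),
      ((List.range m).map Y).prod a b =
        if (a : ℕ) < m ∨ 2 * k - m ≤ (a : ℕ) then
          (if b = a ∨ (a : ℕ) + (b : ℕ) + 1 = 2 * k then X a b else 0)
        else (if b = a then 1 else 0) := by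
    intro m
    induction m with
    | zero =>
      intro _ a b
      have ha : ¬((a : ℕ) < 0 ∨ 2 * k - 0 ≤ (a : ℕ)) := by
        have := a.isLt; omega
      rw [if_neg ha]
      simp [Matrix.one_apply, eq_comm]
    | succ m ih =>
      intro hm a b
      have hmk : m < k := hm
      have ihm := ih (le_of_lt hmk)
      rw [List.range_succ, List.map_append, List.prod_append, List.map_singleton,
        List.prod_singleton, Matrix.mul_apply]
      by_cases h1 : (a : ℕ) < m ∨ 2 * k - m ≤ (a : ℕ)
      · -- row a already touched by an index < m
        have hrow : ∀ c : Fin (2 * k),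
            ((List.range m).map Y).prod a c =
              if c = a ∨ (a : ℕ) + (c : ℕ) + 1 = 2 * k then X a c else 0 := by
          intro c; rw [ihm a c, if_pos h1]
        set A : Fin (2 * k) := ⟨2 * k - 1 - (a : ℕ), by omega⟩ with hA
        have hAval : (A : ℕ) = 2 * k - 1 - (a : ℕ) := rfl
        have haA : a ≠ A := by
          intro h
          have := congrArg Fin.val h
          rw [hAval] at this
          have := a.isLt; omega
        have hsum : (∑ c, ((List.range m).map Y).prod a c * Y m c b) =
            ((List.range m).map Y).prod a a * Y m a b +
            ((List.range m).map Y).prod a A * Y m A b := by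
          refine Finset.sum_eq_add_of_mem a A (Finset.mem_univ a) (Finset.mem_univ A)
            haA ?_
          intro c _ hc
          rw [hrow c, if_neg, zero_mul]
          rintro (rfl | hanti)
          · exact hc.1 rfl
          · apply hc.2
            apply Fin.ext
            rw [hAval]
            omega
        rw [hsum, hrow a, hrow A, if_pos (Or.inl rfl), if_pos]
        · -- Y m is identity on rows a and A
          have hYa : Y m a b = if a = b then 1 else 0 := by
            rw [hY m hmk a b, if_neg, Matrix.one_apply]
            rintro ⟨(h | h), -⟩ <;> omega
          have hYA : Y m A b = if A = b then 1 else 0 := by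
            rw [hY m hmk A b, if_neg, Matrix.one_apply]
            rintro ⟨(h | h), -⟩ <;> rw [hAval] at h <;> omega
          have hcond : (a : ℕ) < m + 1 ∨ 2 * k - (m + 1) ≤ (a : ℕ) := by omega
          rw [if_pos hcond, hYa, hYA]
          by_cases hab : b = a
          · subst hab
            rw [if_pos (Or.inl rfl), if_pos rfl, if_neg (fun h => haA h.symm)]
            ring
          · by_cases hanti : (a : ℕ) + (b : ℕ) + 1 = 2 * k
            · have hAb : A = b := by apply Fin.ext; rw [hAval]; omega
              rw [if_pos (Or.inr hanti), if_neg (fun h => hab h.symm), if_pos hAb,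
                hAb]
              ring
            · have hAb : A ≠ b := by
                intro h
                have := congrArg Fin.val h
                rw [hAval] at this
                have := a.isLt; omega
              rw [if_neg (fun h : a = b => hab h.symm), if_neg hAb,
                if_neg (show ¬(b = a ∨ (a : ℕ) + (b : ℕ) + 1 = 2 * k) by tauto)]
              ring
        · right; rw [hAval]; have := a.isLt; omega
      · -- row a not touched by indices < m : partial product row is identity
        have hrow : ∀ c : Fin (2 * k),
            ((List.range m).map Y).prod a c = if c = a then 1 else 0 := by
          intro c; rw [ihm a c, if_neg h1]
        have hsum : (∑ c, ((List.range m).map Y).prod a c * Y m c b) = Y m a b := by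
          rw [Finset.sum_congr rfl fun c _ => by rw [hrow c]]
          simp
        rw [hsum, hY m hmk a b]
        by_cases h2 : (a : ℕ) = m ∨ (a : ℕ) = 2 * k - 1 - m
        · have hcond : (a : ℕ) < m + 1 ∨ 2 * k - (m + 1) ≤ (a : ℕ) := by omega
          rw [if_pos hcond]
          by_cases h3 : (b : ℕ) = m ∨ (b : ℕ) = 2 * k - 1 - m
          · rw [if_pos ⟨h2, h3⟩, if_pos]
            rcases h2 with h2 | h2 <;> rcases h3 with h3 | h3
            · left; apply Fin.ext; omega
            · right; omega
            · right; omega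
            · left; apply Fin.ext; omega
          · rw [if_neg (by tauto), Matrix.one_apply, if_neg, if_neg]
            · rintro (rfl | hanti)
              · exact h3 h2
              · apply h3; omega
            · intro h
              have hv : (a : ℕ) = (b : ℕ) := congrArg Fin.val h
              apply h3
              rcases h2 with h2 | h2
              · exact Or.inl (by omega)
              · exact Or.inr (by omega)
        · have hcond : ¬((a : ℕ) < m + 1 ∨ 2 * k - (m + 1) ≤ (a : ℕ)) := by omega
          rw [if_neg hcond, if_neg (by tauto), Matrix.one_apply]
          by_cases hab : a = b
          · rw [if_pos hab, if_pos hab.symm]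
          · rw [if_neg hab, if_neg (fun h => hab h.symm)]
  ext a b
  rw [key k le_rfl a b, if_pos (by have := a.isLt; omega)]
  by_cases hab : b = a
  · rw [if_pos (Or.inl hab)]
  · by_cases hanti : (a : ℕ) + (b : ℕ) + 1 = 2 * k
    · rw [if_pos (Or.inr hanti)]
    · rw [if_neg (by tauto)]
      exact hX a b hab hanti
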